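/- Fix a ∈ (0, 1/2]. If α ∈ ℝ is such that 1 + α·r'^2 < K_a(r)/(sin(πa)·log(e^{R(a)/2}/r')) holds for every r ∈ (0,1), then α ≤ π/(R(a)·sin(πa)) − 1; i.e., the constant α₀ = π/(R(a)·sin(πa)) − 1 in the lower bound is best possible. -/

import Mathlib

open Real Set Filter Topology

/-- The digamma function `ψ(x) = Γ'(x)/Γ(x)`. -/
noncomputable def digamma (x : ℝ) : ℝ := deriv Real.Gamma x / Real.Gamma x

/-- The Ramanujan constant function `R(x) = -2γ - ψ(x) - ψ(1-x)`. -/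
noncomputable def ramanujanR (x : ℝ) : ℝ :=
  -2 * Real.eulerMascheroniConstant - digamma x - digamma (1 - x)

/-- The Riemann zeta function as a real series `ζ(s) = Σ_{n=1}^∞ n^{-s}`. -/
noncomputable def zetaR (s : ℝ) : ℝ := ∑' n : ℕ, 1 / ((n : ℝ) + 1) ^ s

/-- The generalized elliptic integral of the first kind
`K_a(r) = (π/2) Σ_{n=0}^∞ ((a)_n (1-a)_n / (n!)^2) r^(2n)`. -/
noncomputable def Ka (a r : ℝ) : ℝ :=
  Real.pi / 2 * ∑' n : ℕ,
    (Polynomial.eval a (ascPochhammer ℝ n) * Polynomial.eval (1 - a) (ascPochhammer ℝ n)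
      / (Nat.factorial n : ℝ) ^ 2) * r ^ (2 * n)

/-- The generalized elliptic integral of the second kind
`E_a(r) = (π/2) Σ_{n=0}^∞ ((a-1)_n (1-a)_n / (n!)^2) r^(2n)`. -/
noncomputable def Ea (a r : ℝ) : ℝ :=
  Real.pi / 2 * ∑' n : ℕ,
    (Polynomial.eval (a - 1) (ascPochhammer ℝ n) * Polynomial.eval (1 - a) (ascPochhammer ℝ n)
      / (Nat.factorial n : ℝ) ^ 2) * r ^ (2 * n)

lemma deriv_log_Gamma_eq {x : ℝ} (hx : 0 < x) :
    deriv (fun y => Real.log (Real.Gamma y)) x = digamma x := by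
  have hd : DifferentiableAt ℝ Real.Gamma x :=
    Real.differentiableAt_Gamma (fun m => by
      have hm : -(m:ℝ) ≤ 0 := neg_nonpos.2 (Nat.cast_nonneg m)
      intro hcon; rw [hcon] at hx; linarith)
  rw [deriv.log hd (Real.Gamma_pos_of_pos hx).ne']
  rfl

lemma digamma_mono {x y : ℝ} (hx : 0 < x) (hxy : x ≤ y) : digamma x ≤ digamma y := by
  have hy : 0 < y := lt_of_lt_of_le hx hxy
  have hmono := Real.convexOn_log_Gamma.monotoneOn_deriv (fun z hz => by
    have hz' : (0:ℝ) < z := hz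
    have hd : DifferentiableAt ℝ Real.Gamma z :=
      Real.differentiableAt_Gamma (fun m => by
        have hm : -(m:ℝ) ≤ 0 := neg_nonpos.2 (Nat.cast_nonneg m)
        intro hcon; rw [hcon] at hz'; linarith)
    exact (hd.log (Real.Gamma_pos_of_pos hz').ne'))
  have := hmono (Set.mem_Ioi.2 hx) (Set.mem_Ioi.2 hy) hxy
  have e1 : deriv (Real.log ∘ Real.Gamma) x = digamma x := deriv_log_Gamma_eq hx
  have e2 : deriv (Real.log ∘ Real.Gamma) y = digamma y := deriv_log_Gamma_eq hy
  rwa [e1, e2] at this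

lemma digamma_one : digamma 1 = -Real.eulerMascheroniConstant := by
  unfold digamma
  rw [Real.hasDerivAt_Gamma_one.deriv, Real.Gamma_one, div_one]

lemma digamma_one_half :
    digamma (1/2) = -Real.eulerMascheroniConstant - 2 * Real.log 2 := by
  unfold digamma
  rw [Real.hasDerivAt_Gamma_one_half.deriv, Real.Gamma_one_half_eq]
  have hπ : Real.sqrt Real.pi ≠ 0 := by
    positivity
  field_simp
  ring

lemma ramanujanR_pos {a : ℝ} (ha : a ∈ Set.Ioc (0 : ℝ) (1/2)) : 0 < ramanujanR a := by
  obtain ⟨ha0, ha1⟩ := ha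
  have h1 : digamma a ≤ digamma (1/2) := digamma_mono ha0 ha1
  have h2 : digamma (1 - a) ≤ digamma 1 := digamma_mono (by linarith) (by linarith)
  have hlog2 : (0:ℝ) < Real.log 2 := Real.log_pos (by norm_num)
  rw [digamma_one_half] at h1
  rw [digamma_one] at h2
  unfold ramanujanR
  linarith

lemma poch_le_factorial {x : ℝ} (h0 : 0 < x) (h1 : x ≤ 1) (n : ℕ) :
    Polynomial.eval x (ascPochhammer ℝ n) ≤ (Nat.factorial n : ℝ) := by
  induction n with
  | zero => simp
  | succ n ih =>
    rw [ascPochhammer_succ_right]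
    simp only [Polynomial.eval_mul, Polynomial.eval_add, Polynomial.eval_X,
      Polynomial.eval_natCast]
    have hp := ascPochhammer_pos n x h0
    have hfac : (Nat.factorial (n+1) : ℝ) = (Nat.factorial n : ℝ) * ((n:ℝ)+1) := by
      rw [Nat.factorial_succ]; push_cast; ring
    rw [hfac]
    nlinarith [Nat.cast_nonneg (α := ℝ) n, (Nat.cast_pos (α := ℝ)).2 (Nat.factorial_pos n)]

theorem stmt2 (a : ℝ) (ha : a ∈ Set.Ioc (0 : ℝ) (1/2)) (α : ℝ)
    (h : ∀ r ∈ Set.Ioo (0 : ℝ) 1,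
      1 + α * (Real.sqrt (1 - r^2))^2 <
        Ka a r / (Real.sin (Real.pi * a) *
          Real.log (Real.exp (ramanujanR a / 2) / Real.sqrt (1 - r^2)))) :
    α ≤ Real.pi / (ramanujanR a * Real.sin (Real.pi * a)) - 1 := by
  obtain ⟨ha0, ha1⟩ := ha
  set R := ramanujanR a with hRdef
  have hRpos : 0 < R := ramanujanR_pos ⟨ha0, ha1⟩
  have hs : 0 < Real.sin (Real.pi * a) := by
    apply Real.sin_pos_of_pos_of_lt_pi
    · positivity
    · nlinarith [Real.pi_pos]
  set c : ℕ → ℝ := fun n =>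
    Polynomial.eval a (ascPochhammer ℝ n) * Polynomial.eval (1 - a) (ascPochhammer ℝ n)
      / (Nat.factorial n : ℝ) ^ 2 with hc
  have ha1' : (0:ℝ) < 1 - a := by linarith
  have hc0 : ∀ n, 0 ≤ c n := fun n => by
    have h1 := ascPochhammer_pos n a ha0
    have h2 := ascPochhammer_pos n (1-a) ha1'
    have hf : (0:ℝ) < (Nat.factorial n : ℝ) := Nat.cast_pos.2 (Nat.factorial_pos n)
    rw [hc]
    positivity
  have hc1 : ∀ n, c n ≤ 1 := fun n => by
    have h1 := poch_le_factorial ha0 (by linarith) n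
    have h2 := poch_le_factorial ha1' (by linarith) n
    have hp1 := ascPochhammer_pos n a ha0
    have hp2 := ascPochhammer_pos n (1-a) ha1'
    have hf : (0:ℝ) < (Nat.factorial n : ℝ) := Nat.cast_pos.2 (Nat.factorial_pos n)
    rw [hc, div_le_one (by positivity)]
    calc Polynomial.eval a (ascPochhammer ℝ n) * Polynomial.eval (1 - a) (ascPochhammer ℝ n)
        ≤ (Nat.factorial n : ℝ) * (Nat.factorial n : ℝ) :=
          mul_le_mul h1 h2 hp2.le (by positivity)
      _ = (Nat.factorial n : ℝ) ^ 2 := by ring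
  have hKa_eq : ∀ r : ℝ, Ka a r = Real.pi / 2 * ∑' n : ℕ, c n * r ^ (2*n) := by
    intro r; simp only [Ka, hc]
  -- bounds on the series for r ∈ (0,1)
  have hbounds : ∀ r : ℝ, r ∈ Set.Ioo (0:ℝ) 1 →
      1 ≤ (∑' n : ℕ, c n * r ^ (2*n)) ∧ (∑' n : ℕ, c n * r ^ (2*n)) ≤ (1 - r^2)⁻¹ := by
    intro r hr
    have hr2 : r^2 < 1 := by nlinarith [hr.1, hr.2]
    have hr2' : (0:ℝ) ≤ r^2 := sq_nonneg r
    have hterm0 : ∀ n, 0 ≤ c n * r ^ (2*n) := fun n =>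
      mul_nonneg (hc0 n) (pow_nonneg hr.1.le _)
    have hterm : ∀ n, c n * r ^ (2*n) ≤ (r^2)^n := fun n => by
      rw [pow_mul]
      calc c n * (r^2)^n ≤ 1 * (r^2)^n :=
            mul_le_mul_of_nonneg_right (hc1 n) (by positivity)
        _ = (r^2)^n := one_mul _
    have hgeom : Summable (fun n : ℕ => (r^2)^n) := summable_geometric_of_lt_one hr2' hr2
    have hsum : Summable (fun n : ℕ => c n * r ^ (2*n)) :=
      Summable.of_nonneg_of_le hterm0 hterm hgeom
    constructor
    · have := Summable.le_tsum hsum 0 (fun i _ => hterm0 i)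
      simpa [hc] using this
    · calc (∑' n : ℕ, c n * r ^ (2*n)) ≤ ∑' n : ℕ, (r^2)^n := Summable.tsum_le_tsum hterm hsum hgeom
        _ = (1 - r^2)⁻¹ := tsum_geometric_of_lt_one hr2' hr2
  have hmem : Set.Ioo (0:ℝ) 1 ∈ 𝓝[>] (0:ℝ) :=
    Ioo_mem_nhdsGT_of_mem (by norm_num : (0:ℝ) ∈ Set.Ico (0:ℝ) 1)
  -- upper envelope tends to 1
  have hup : Tendsto (fun r : ℝ => (1 - r^2)⁻¹) (𝓝[>] (0:ℝ)) (𝓝 1) := by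
    have hcont : ContinuousAt (fun r : ℝ => (1 - r^2)⁻¹) 0 := by
      apply ContinuousAt.inv₀
      · fun_prop
      · norm_num
    have := hcont.tendsto.mono_left (nhdsWithin_le_nhds (s := Set.Ioi (0:ℝ)))
    norm_num at this
    exact this
  have hS : Tendsto (fun r : ℝ => ∑' n : ℕ, c n * r ^ (2*n)) (𝓝[>] (0:ℝ)) (𝓝 1) := by
    refine tendsto_of_tendsto_of_tendsto_of_le_of_le' tendsto_const_nhds hup ?_ ?_
    · filter_upwards [hmem] with r hr; exact (hbounds r hr).1
    · filter_upwards [hmem] with r hr; exact (hbounds r hr).2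
  have hKa : Tendsto (fun r : ℝ => Ka a r) (𝓝[>] (0:ℝ)) (𝓝 (Real.pi / 2)) := by
    have := hS.const_mul (Real.pi / 2)
    rw [mul_one] at this
    exact this.congr fun r => (hKa_eq r).symm
  -- the denominator
  have hsqrt : Tendsto (fun r : ℝ => Real.sqrt (1 - r^2)) (𝓝[>] (0:ℝ)) (𝓝 1) := by
    have hcont : ContinuousAt (fun r : ℝ => Real.sqrt (1 - r^2)) 0 := by fun_prop
    have := hcont.tendsto.mono_left (nhdsWithin_le_nhds (s := Set.Ioi (0:ℝ)))
    norm_num at this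
    exact this
  have hinner : Tendsto (fun r : ℝ => Real.exp (R/2) / Real.sqrt (1 - r^2)) (𝓝[>] (0:ℝ))
      (𝓝 (Real.exp (R/2))) := by
    have := (tendsto_const_nhds (x := Real.exp (R/2)) (f := 𝓝[>] (0:ℝ))).div hsqrt one_ne_zero
    simpa [Pi.div_def] using this
  have hlog : Tendsto (fun r : ℝ => Real.log (Real.exp (R/2) / Real.sqrt (1 - r^2)))
      (𝓝[>] (0:ℝ)) (𝓝 (R/2)) := by
    have := hinner.log (Real.exp_ne_zero _)
    rwa [Real.log_exp] at this
  have hden : Tendsto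
      (fun r : ℝ => Real.sin (Real.pi * a) * Real.log (Real.exp (R/2) / Real.sqrt (1 - r^2)))
      (𝓝[>] (0:ℝ)) (𝓝 (Real.sin (Real.pi * a) * (R/2))) := hlog.const_mul _
  have hdne : Real.sin (Real.pi * a) * (R/2) ≠ 0 := (mul_pos hs (by linarith : (0:ℝ) < R/2)).ne'
  have hRHS := hKa.div hden hdne
  have hLHS : Tendsto (fun r : ℝ => 1 + α * (Real.sqrt (1 - r^2))^2) (𝓝[>] (0:ℝ))
      (𝓝 (1 + α)) := by
    have := ((hsqrt.pow 2).const_mul α).const_add 1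
    simpa using this
  have key : 1 + α ≤ (Real.pi / 2) / (Real.sin (Real.pi * a) * (R/2)) := by
    refine le_of_tendsto_of_tendsto hLHS hRHS ?_
    filter_upwards [hmem] with r hr
    simpa [Pi.div_apply] using (h r hr).le
  have heq : (Real.pi / 2) / (Real.sin (Real.pi * a) * (R/2))
      = Real.pi / (R * Real.sin (Real.pi * a)) := by
    rw [div_eq_div_iff hdne ((mul_pos hRpos hs).ne')]
    ring
  rw [heq] at key
  linarith
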